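/- Let G be a countably infinite group and let (N_n)_{n∈ℕ} be a sequence of normal subgroups of G of finite index such that the indices [G : N_n] are pairwise coprime. Then for any sequence (g_n)_{n∈ℕ} in G, the set A = G \ ⋃_{n∈ℕ} g_nN_n is not piecewise syndetic. -/

import Mathlib

/-- A set `A` in a semigroup `G` is thick if for every finite `F ⊆ G`
there exists `g ∈ G` with `Fg ⊆ A`. -/
def Thick {G : Type*} [Semigroup G] (A : Set G) : Prop :=
  ∀ F : Finset G, ∃ g : G, ∀ f ∈ F, f * g ∈ A

/-- A set `A` in a semigroup `G` is piecewise syndetic if there is a finite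
`H ⊆ G` such that `H⁻¹A = ⋃_{h ∈ H} h⁻¹A` is thick. -/
def PiecewiseSyndetic {G : Type*} [Semigroup G] (A : Set G) : Prop :=
  ∃ H : Finset G, Thick {x : G | ∃ h ∈ H, h * x ∈ A}


section aux
variable {G : Type*} [Group G]

/-- CRT for two normal subgroups generating the whole group. -/
lemma crt_pair (A B : Subgroup G) (hA : A.Normal) (htop : A ⊔ B = ⊤) (a b : G) :
    ∃ x : G, a⁻¹ * x ∈ A ∧ b⁻¹ * x ∈ B := by
  haveI := hA
  have h : a⁻¹ * b ∈ ((A ⊔ B : Subgroup G) : Set G) := by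
    rw [htop]; trivial
  rw [Subgroup.normal_mul] at h
  obtain ⟨u, hu, v, hv, huv⟩ := h
  refine ⟨a * u, by simpa using hu, ?_⟩
  have : b⁻¹ * (a * u) = ((a⁻¹ * b)⁻¹) * u := by group
  rw [this, ← huv]
  simpa using B.inv_mem hv

lemma inf_normal_dvd {ι : Type*} [DecidableEq ι] (N : ι → Subgroup G) (s : Finset ι)
    (hnorm : ∀ i ∈ s, (N i).Normal) :
    (s.inf N).Normal ∧ (s.inf N).index ∣ ∏ i ∈ s, (N i).index := by
  induction s using Finset.induction_on with
  | empty =>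
    simp only [Finset.inf_empty, Finset.prod_empty, Subgroup.index_top]
    exact ⟨inferInstance, dvd_refl 1⟩
  | @insert i s hi ih =>
    obtain ⟨hKn, hKd⟩ := ih (fun j hj => hnorm j (Finset.mem_insert_of_mem hj))
    haveI := hKn
    haveI := hnorm i (Finset.mem_insert_self i s)
    rw [Finset.inf_insert, Finset.prod_insert hi]
    set A := N i
    set K := s.inf N
    refine ⟨inferInstance, ?_⟩
    have h1 : (A ⊓ K).relIndex K * K.index = (A ⊓ K).index :=
      Subgroup.relIndex_mul_index inf_le_right
    have h2 : (A ⊓ K).relIndex K = A.relIndex K := Subgroup.inf_relIndex_right A K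
    have h3 : A.relIndex K ∣ A.index := Subgroup.relIndex_dvd_index_of_normal A K
    calc (A ⊓ K).index = A.relIndex K * K.index := by rw [← h1, h2]
      _ ∣ A.index * ∏ i ∈ s, (N i).index := mul_dvd_mul h3 hKd

lemma crt_finset {ι : Type*} [DecidableEq ι] (N : ι → Subgroup G) (s : Finset ι)
    (hnorm : ∀ i ∈ s, (N i).Normal)
    (hcop : ∀ i ∈ s, ∀ j ∈ s, i ≠ j → Nat.Coprime ((N i).index) ((N j).index))
    (c : ι → G) :
    ∃ x : G, ∀ i ∈ s, (c i)⁻¹ * x ∈ N i := by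
  induction s using Finset.induction_on with
  | empty => exact ⟨1, by simp⟩
  | @insert i s hi ih =>
    obtain ⟨y, hy⟩ := ih (fun j hj => hnorm j (Finset.mem_insert_of_mem hj))
      (fun a ha b hb hab => hcop a (Finset.mem_insert_of_mem ha) b (Finset.mem_insert_of_mem hb) hab)
    obtain ⟨hKn, hKd⟩ := inf_normal_dvd N s (fun j hj => hnorm j (Finset.mem_insert_of_mem hj))
    haveI hAn := hnorm i (Finset.mem_insert_self i s)
    set A := N i
    set K := s.inf N with hK
    -- coprimality of A.index and K.index
    have hcp : Nat.Coprime A.index K.index := by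
      have : Nat.Coprime A.index (∏ j ∈ s, (N j).index) := by
        apply Nat.Coprime.prod_right
        intro j hj
        exact hcop i (Finset.mem_insert_self i s) j (Finset.mem_insert_of_mem hj)
          (fun h => hi (h ▸ hj))
      exact Nat.Coprime.coprime_dvd_right hKd this
    have htop : A ⊔ K = ⊤ := by
      have h1 : (A ⊔ K).index ∣ A.index := Subgroup.index_dvd_of_le le_sup_left
      have h2 : (A ⊔ K).index ∣ K.index := Subgroup.index_dvd_of_le le_sup_right
      have := Nat.eq_one_of_dvd_coprimes hcp h1 h2
      rwa [Subgroup.index_eq_one] at this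
    obtain ⟨x, hx1, hx2⟩ := crt_pair A K hAn htop (c i) y
    refine ⟨x, ?_⟩
    intro j hj
    rcases Finset.mem_insert.mp hj with rfl | hj'
    · exact hx1
    · have hKle : K ≤ N j := Finset.inf_le hj'
      have : (c j)⁻¹ * x = ((c j)⁻¹ * y) * (y⁻¹ * x) := by group
      rw [this]
      exact (N j).mul_mem (hy j hj') (hKle hx2)

end aux

/-- Let `G` be a countably infinite group and `(N n)` a sequence of normal
finite-index subgroups whose indices are pairwise coprime.  Then for any
sequence `(g n)` in `G`, the set `G \ ⋃ₙ gₙNₙ` is not piecewise syndetic. -/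
theorem complement_of_cosets_not_piecewiseSyndetic {G : Type*} [Group G]
    [Countable G] [Infinite G]
    (N : ℕ → Subgroup G) (hnorm : ∀ n, (N n).Normal)
    (hfin : ∀ n, (N n).index ≠ 0)
    (hcop : ∀ m n, m ≠ n → Nat.Coprime ((N m).index) ((N n).index))
    (g : ℕ → G) :
    ¬ PiecewiseSyndetic
      (Set.univ \ ⋃ n, {x : G | ∃ y ∈ N n, x = g n * y}) := by
  classical
  rintro ⟨H, hT⟩
  obtain ⟨e, he⟩ := exists_injective_nat G
  set N' : G → Subgroup G := fun h => N (e h) with hN'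
  set K : Subgroup G := H.inf N' with hKdef
  obtain ⟨hKn, hKd⟩ := inf_normal_dvd N' H (fun h _ => hnorm (e h))
  have hK0 : K.index ≠ 0 := by
    intro h0
    rw [h0] at hKd
    exact Finset.prod_ne_zero_iff.mpr (fun i _ => hfin (e i)) (Nat.eq_zero_of_zero_dvd hKd)
  haveI : K.FiniteIndex := ⟨hK0⟩
  haveI : Finite (G ⧸ K) := Subgroup.finite_quotient_of_finiteIndex
  have hrange : (Set.range (Quotient.out : G ⧸ K → G)).Finite := Set.finite_range _
  obtain ⟨t, ht⟩ := hT hrange.toFinset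
  obtain ⟨x, hx⟩ := crt_finset N' H (fun h _ => hnorm (e h))
    (fun i _ j _ hij => hcop (e i) (e j) (fun h' => hij (he h')))
    (fun h => h⁻¹ * g (e h) * t⁻¹)
  set f : G := (QuotientGroup.mk x : G ⧸ K).out with hf
  have hfF : f ∈ hrange.toFinset := hrange.mem_toFinset.mpr ⟨_, rfl⟩
  obtain ⟨h, hh, hA⟩ := ht f hfF
  apply hA.2
  have hk : x⁻¹ * f ∈ K := by
    have hq : (QuotientGroup.mk x : G ⧸ K) = QuotientGroup.mk f := (Quotient.out_eq _).symm
    exact (QuotientGroup.eq).mp hq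
  refine Set.mem_iUnion.mpr ⟨e h, ?_⟩
  refine ⟨(g (e h))⁻¹ * (h * (f * t)), ?_, by group⟩
  have hu : (h⁻¹ * g (e h) * t⁻¹)⁻¹ * x ∈ N (e h) := hx h hh
  have hKl : K ≤ N (e h) := Finset.inf_le hh
  have hk' : x⁻¹ * f ∈ N (e h) := hKl hk
  have key : (g (e h))⁻¹ * (h * (f * t))
      = t⁻¹ * ((((h⁻¹ * g (e h) * t⁻¹)⁻¹ * x) * (x⁻¹ * f))) * t := by group
  rw [key]
  simpa using (hnorm (e h)).conj_mem _ ((N (e h)).mul_mem hu hk') t⁻¹
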